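/- The weight sequence M with M_0 = 1 and M_p = q^{p^p} for p ≥ 1 (q > 1 fixed) does not satisfy the shifted moments property: there exist no constants C_0 > 0, H > 1 such that log(m_{p+1}/m_p) ≤ C_0 H^{p+1} for all p, where m_p = M_{p+1}/M_p. -/

import Mathlib

/-- The weight sequence `M 0 = 1`, `M p = q ^ (p ^ p)` for `p ≥ 1` (with `q > 1`)
does not satisfy the shifted moments property. -/
theorem qpowpp_not_sm (q : ℝ) (hq : 1 < q) (M : ℕ → ℝ) (hM0 : M 0 = 1)
    (hM : ∀ p : ℕ, 1 ≤ p → M p = q ^ (p ^ p)) :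
    ¬ ∃ C0 > (0:ℝ), ∃ H > (1:ℝ), ∀ p : ℕ,
        Real.log ((M (p+2) / M (p+1)) / (M (p+1) / M p)) ≤ C0 * H ^ (p+1) := by
  rintro ⟨C0, hC0, H, hH, h⟩
  have hq0 : (0:ℝ) < q := lt_trans one_pos hq
  have hlq : 0 < Real.log q := Real.log_pos hq
  obtain ⟨n, hn⟩ := exists_nat_gt (max (2*H) (C0 / Real.log q))
  set p := max n 2 with hp
  have hp2 : 2 ≤ p := le_max_right n 2
  have hpn : n ≤ p := le_max_left n 2
  have hnp : max (2*H) (C0 / Real.log q) < (p:ℝ) :=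
    lt_of_lt_of_le hn (by exact_mod_cast hpn)
  have hH2 : 2*H < (p:ℝ) := lt_of_le_of_lt (le_max_left _ _) hnp
  have hCl : C0 / Real.log q < (p:ℝ) := lt_of_le_of_lt (le_max_right _ _) hnp
  have key := h p
  rw [hM p (by omega), hM (p+1) (by omega), hM (p+2) (by omega),
    Real.log_div (by positivity) (by positivity),
    Real.log_div (by positivity) (by positivity),
    Real.log_div (by positivity) (by positivity),
    Real.log_pow, Real.log_pow, Real.log_pow] at key
  -- natural number inequality
  have hnat : 3*(p+1)^(p+1) ≤ (p+2)^(p+2) := by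
    calc 3*(p+1)^(p+1) ≤ (p+1)*(p+1)^(p+1) := Nat.mul_le_mul_right _ (by omega)
      _ = (p+1)^(p+2) := by ring
      _ ≤ (p+2)^(p+2) := Nat.pow_le_pow_left (by omega) _
  have hnatR : (3:ℝ)*((p+1)^(p+1):ℕ) ≤ (((p+2)^(p+2):ℕ):ℝ) := by exact_mod_cast hnat
  have hpp : (0:ℝ) ≤ ((p^p : ℕ):ℝ) := Nat.cast_nonneg _
  have hlow : (((p+1)^(p+1):ℕ):ℝ) * Real.log q ≤
      (((p+2)^(p+2):ℕ):ℝ) * Real.log q - (((p+1)^(p+1):ℕ):ℝ) * Real.log q -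
        ((((p+1)^(p+1):ℕ):ℝ) * Real.log q - ((p^p:ℕ):ℝ) * Real.log q) := by
    nlinarith [hlq.le]
  -- (p+1)^(p+1) ≥ (2H)^(p+1)
  have h2H : (0:ℝ) ≤ 2*H := by linarith
  have hpow1 : (2*H)^(p+1) ≤ ((p:ℝ)+1)^(p+1) :=
    pow_le_pow_left₀ h2H (by linarith) _
  have hcast : (((p+1)^(p+1):ℕ):ℝ) = ((p:ℝ)+1)^(p+1) := by push_cast; ring
  -- 2^(p+1) > p+1 > C0 / log q
  have h2p : ((p:ℝ)+1) < (2:ℝ)^(p+1) := by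
    have := Nat.lt_two_pow_self (n := p+1)
    exact_mod_cast this
  have hC0lt : C0 < (2:ℝ)^(p+1) * Real.log q := by
    have : C0 / Real.log q < (2:ℝ)^(p+1) := by linarith
    calc C0 = (C0 / Real.log q) * Real.log q := by field_simp
      _ < (2:ℝ)^(p+1) * Real.log q := by
          exact mul_lt_mul_of_pos_right this hlq
  have hHpos : (0:ℝ) < H^(p+1) := pow_pos (by linarith) _
  have hfinal : C0 * H^(p+1) < (((p+1)^(p+1):ℕ):ℝ) * Real.log q := by
    have h1 : C0 * H^(p+1) < ((2:ℝ)^(p+1) * Real.log q) * H^(p+1) :=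
      mul_lt_mul_of_pos_right hC0lt hHpos
    have h2 : ((2:ℝ)^(p+1) * Real.log q) * H^(p+1) = (2*H)^(p+1) * Real.log q := by
      rw [mul_pow]; ring
    have h3 : (2*H)^(p+1) * Real.log q ≤ ((p:ℝ)+1)^(p+1) * Real.log q :=
      mul_le_mul_of_nonneg_right hpow1 hlq.le
    rw [hcast]; linarith
  linarith
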